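/- Define λ_n by λ_0 = 1 and (n+1)·λ_{n+1} = Σ_{k=0}^n 2^{4k+1}·|E_{2k+2}|·λ_{n-k}, where E_m are the Euler numbers. Then ν₂(λ_n) = s(n) for every n, where ν₂ is the 2-adic valuation and s(n) is the binary digit sum of n. -/

import Mathlib

open Finset ArithmeticFunction

/-- The power series of `cosh x = ∑ x^{2k}/(2k)!` over `ℚ`. -/
noncomputable def coshSeries : PowerSeries ℚ :=
  PowerSeries.mk fun n => if Even n then ((n.factorial : ℚ))⁻¹ else 0

/-- The Euler numbers, defined by `1 / cosh x = ∑ Eₙ xⁿ / n!`. -/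
noncomputable def eulerNumber (n : ℕ) : ℚ :=
  (n.factorial : ℚ) * PowerSeries.coeff n coshSeries⁻¹

lemma constCoeff_cosh : PowerSeries.constantCoeff coshSeries = 1 := by
  simp [coshSeries, ← PowerSeries.coeff_zero_eq_constantCoeff]

lemma euler_zero : eulerNumber 0 = 1 := by
  simp [eulerNumber, PowerSeries.coeff_zero_eq_constantCoeff,
    PowerSeries.constantCoeff_inv, constCoeff_cosh]

lemma coeff_cosh (k : ℕ) : PowerSeries.coeff k coshSeries =
    if Even k then ((k.factorial : ℚ))⁻¹ else 0 := by
  simp [coshSeries]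

lemma euler_rec (n : ℕ) (hn : n ≠ 0) :
    eulerNumber n = -∑ k ∈ Finset.Icc 1 n,
      (if Even k then (n.choose k : ℚ) * eulerNumber (n - k) else 0) := by
  have hmul := PowerSeries.mul_inv_cancel coshSeries (by rw [constCoeff_cosh]; norm_num)
  have h := congrArg (PowerSeries.coeff n) hmul
  rw [PowerSeries.coeff_mul, PowerSeries.coeff_one, if_neg hn,
    Finset.Nat.sum_antidiagonal_eq_sum_range_succ_mk, Finset.sum_range_succ'] at h
  simp only [coeff_cosh] at h
  have h0 : (if Even 0 then ((Nat.factorial 0 : ℚ))⁻¹ else 0) = 1 := by norm_num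
  rw [h0, one_mul, Nat.sub_zero] at h
  have hd : PowerSeries.coeff n coshSeries⁻¹ =
      -∑ i ∈ Finset.range n, (if Even (i + 1) then (((i+1).factorial : ℚ))⁻¹ else 0) *
        PowerSeries.coeff (n - (i + 1)) coshSeries⁻¹ := by linarith [h]
  rw [← Finset.Ico_add_one_right_eq_Icc, Finset.sum_Ico_eq_sum_range]
  rw [eulerNumber, hd, mul_neg, neg_inj, Finset.mul_sum]
  have hnn : n + 1 - 1 = n := by omega
  rw [hnn]
  refine Finset.sum_congr rfl fun i hi => ?_
  rw [Finset.mem_range] at hi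
  have hle : 1 + i ≤ n := by omega
  rw [add_comm 1 i]
  by_cases he : Even (i + 1)
  · rw [if_pos he, if_pos he, eulerNumber, Nat.cast_choose ℚ (by omega : i + 1 ≤ n)]
    have f1 : ((i+1).factorial : ℚ) ≠ 0 := Nat.cast_ne_zero.mpr (Nat.factorial_ne_zero _)
    have f2 : (((n - (i+1)).factorial : ℚ)) ≠ 0 := Nat.cast_ne_zero.mpr (Nat.factorial_ne_zero _)
    field_simp
  · rw [if_neg he, if_neg he]; ring

lemma euler_int (n : ℕ) : ∃ z : ℤ, eulerNumber n = (z : ℚ) := by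
  induction n using Nat.strong_induction_on with
  | _ n ih =>
    rcases eq_or_ne n 0 with rfl | hn
    · exact ⟨1, by simp [euler_zero]⟩
    rw [euler_rec n hn]
    have hpt : ∀ k ∈ Finset.Icc 1 n, ∃ z : ℤ,
        (if Even k then (n.choose k : ℚ) * eulerNumber (n - k) else 0) = (z : ℚ) := by
      intro k hk
      simp only [Finset.mem_Icc] at hk
      by_cases he : Even k
      · obtain ⟨z, hz⟩ := ih (n - k) (by omega)
        exact ⟨n.choose k * z, by rw [if_pos he, hz]; push_cast; ring⟩
      · exact ⟨0, by rw [if_neg he]; simp⟩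
    choose f hf using hpt
    refine ⟨-∑ k ∈ (Finset.Icc 1 n).attach, f k.1 k.2, ?_⟩
    rw [← Finset.sum_attach (Finset.Icc 1 n)
      (fun k => if Even k then (n.choose k : ℚ) * eulerNumber (n - k) else 0)]
    push_cast
    rw [neg_inj]
    exact Finset.sum_congr rfl fun k _ => hf k.1 k.2

lemma euler_two : eulerNumber 2 = -1 := by
  rw [euler_rec 2 (by norm_num)]
  rw [show Finset.Icc 1 2 = {1, 2} from rfl]
  rw [Finset.sum_insert (by decide), Finset.sum_singleton]
  norm_num [euler_zero]

theorem stmt_19 (lam : ℕ → ℚ) (h0 : lam 0 = 1)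
    (hrec : ∀ n : ℕ, (n + 1 : ℚ) * lam (n + 1) =
      ∑ k ∈ Finset.range (n + 1),
        2 ^ (4 * k + 1) * |eulerNumber (2 * k + 2)| * lam (n - k)) :
    ∀ n : ℕ, padicValRat 2 (lam n) = ((Nat.digits 2 n).sum : ℤ) := by
  choose e he using fun k => euler_int (2 * k + 2)
  have he0 : e 0 = -1 := by
    have := he 0
    rw [show 2 * 0 + 2 = 2 by norm_num, euler_two] at this
    exact_mod_cast this.symm
  have key : ∀ n : ℕ, ∃ u : ℤ, Odd u ∧
      ((n.factorial : ℚ)) * lam n = 2 ^ n * (u : ℚ) := by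
    intro n
    induction n using Nat.strong_induction_on with
    | _ n ih =>
      cases n with
      | zero => exact ⟨1, odd_one, by simp [h0]⟩
      | succ m =>
        choose u huodd hueq using fun k : ℕ => ih (m - k) (by omega)
        set t : ℕ → ℤ := fun k =>
          (m.choose k : ℤ) * (k.factorial : ℤ) * 2 ^ (3 * k) * |e k| * u k with ht
        have hterm : ∀ k ∈ Finset.range (m + 1),
            (m.factorial : ℚ) * (2 ^ (4 * k + 1) * |eulerNumber (2 * k + 2)| * lam (m - k))
              = 2 ^ (m + 1) * (t k : ℚ) := by
          intro k hk
          rw [Finset.mem_range] at hk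
          have hkm : k ≤ m := by omega
          have hfac : (m.factorial : ℚ)
              = (m.choose k : ℚ) * (k.factorial : ℚ) * ((m - k).factorial : ℚ) := by
            rw [← Nat.choose_mul_factorial_mul_factorial hkm]; push_cast; ring
          have hp : (2 : ℚ) ^ (4 * k + 1) * (2 : ℚ) ^ (m - k)
              = 2 ^ (m + 1) * 2 ^ (3 * k) := by
            rw [← pow_add, ← pow_add]; congr 1; omega
          have habs : |eulerNumber (2 * k + 2)| = ((|e k| : ℤ) : ℚ) := by
            rw [he k, Int.cast_abs]
          calc (m.factorial : ℚ) * (2 ^ (4 * k + 1) * |eulerNumber (2 * k + 2)| * lam (m - k))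
              = (m.choose k : ℚ) * (k.factorial : ℚ) * (2 ^ (4 * k + 1) * ((|e k| : ℤ) : ℚ))
                * (((m - k).factorial : ℚ) * lam (m - k)) := by rw [hfac, habs]; ring
            _ = (m.choose k : ℚ) * (k.factorial : ℚ) * (2 ^ (4 * k + 1) * ((|e k| : ℤ) : ℚ))
                * (2 ^ (m - k) * (u k : ℚ)) := by rw [hueq k]
            _ = ((2 : ℚ) ^ (4 * k + 1) * (2 : ℚ) ^ (m - k))
                * ((m.choose k : ℚ) * (k.factorial : ℚ) * ((|e k| : ℤ) : ℚ) * (u k : ℚ)) := by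
                ring
            _ = 2 ^ (m + 1) * (t k : ℚ) := by rw [hp, ht]; push_cast; ring
        have heq : (((m + 1).factorial : ℚ)) * lam (m + 1)
            = 2 ^ (m + 1) * ((∑ k ∈ Finset.range (m + 1), t k : ℤ) : ℚ) := by
          calc (((m + 1).factorial : ℚ)) * lam (m + 1)
              = (m.factorial : ℚ) * (((m : ℚ) + 1) * lam (m + 1)) := by
                rw [Nat.factorial_succ]; push_cast; ring
            _ = (m.factorial : ℚ) * ∑ k ∈ Finset.range (m + 1),
                2 ^ (4 * k + 1) * |eulerNumber (2 * k + 2)| * lam (m - k) := by rw [hrec m]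
            _ = ∑ k ∈ Finset.range (m + 1), (m.factorial : ℚ) *
                (2 ^ (4 * k + 1) * |eulerNumber (2 * k + 2)| * lam (m - k)) := by
                rw [Finset.mul_sum]
            _ = ∑ k ∈ Finset.range (m + 1), 2 ^ (m + 1) * (t k : ℚ) :=
                Finset.sum_congr rfl hterm
            _ = 2 ^ (m + 1) * ((∑ k ∈ Finset.range (m + 1), t k : ℤ) : ℚ) := by
                rw [← Finset.mul_sum]; push_cast; ring
        refine ⟨∑ k ∈ Finset.range (m + 1), t k, ?_, heq⟩
        rw [Finset.sum_range_succ']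
        have ht0 : t 0 = u 0 := by
          simp [ht, he0]
        have hev : Even (∑ i ∈ Finset.range m, t (i + 1)) := by
          rw [even_iff_two_dvd]
          refine Finset.dvd_sum fun i _ => ?_
          refine ⟨(m.choose (i + 1) : ℤ) * ((i + 1).factorial : ℤ) * 2 ^ (3 * i + 2)
            * |e (i + 1)| * u (i + 1), ?_⟩
          show (m.choose (i+1) : ℤ) * ((i+1).factorial : ℤ) * 2 ^ (3 * (i+1)) * |e (i+1)| * u (i+1) = _
          have h3 : 3 * (i + 1) = (3 * i + 2) + 1 := by omega
          rw [h3, pow_succ]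
          ring
        rw [ht0]
        exact hev.add_odd (huodd 0)
  intro n
  obtain ⟨u, hodd, heq⟩ := key n
  have hu0 : u ≠ 0 := by
    obtain ⟨c, hc⟩ := hodd; omega
  have huQ : (u : ℚ) ≠ 0 := Int.cast_ne_zero.mpr hu0
  have hfacQ : (n.factorial : ℚ) ≠ 0 := Nat.cast_ne_zero.mpr (Nat.factorial_ne_zero n)
  have hlam : lam n = (2 : ℚ) ^ n * (u : ℚ) / (n.factorial : ℚ) := by
    rw [eq_div_iff hfacQ, mul_comm (lam n)]
    exact heq
  have h2 : (2 : ℚ) ≠ 0 := by norm_num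
  rw [hlam, padicValRat.div (mul_ne_zero (pow_ne_zero _ h2) huQ) hfacQ,
    padicValRat.mul (pow_ne_zero _ h2) huQ, padicValRat.pow (2 : ℚ)]
  have hself : padicValRat 2 (2 : ℚ) = 1 := by
    rw [show (2 : ℚ) = ((2 : ℕ) : ℚ) by norm_num]
    exact padicValRat.self (by norm_num)
  have hu : padicValRat 2 ((u : ℚ)) = 0 := by
    rw [padicValRat.of_int]
    have : ¬ (2 : ℤ) ∣ u := by
      intro hdvd
      exact (Int.not_odd_iff_even.mpr (even_iff_two_dvd.mpr hdvd)) hodd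
    rw [padicValInt.eq_zero_of_not_dvd this]
    rfl
  have hfacv : padicValRat 2 ((n.factorial : ℚ)) = ((n - (Nat.digits 2 n).sum : ℕ) : ℤ) := by
    rw [show ((n.factorial : ℚ)) = ((n.factorial : ℕ) : ℚ) by norm_num, ← padicValRat_of_nat]
    congr 1
    have := sub_one_mul_padicValNat_factorial (p := 2) n
    simpa using this
  rw [hself, hu, hfacv]
  have hle : (Nat.digits 2 n).sum ≤ n := Nat.digit_sum_le 2 n
  push_cast [Nat.cast_sub hle]
  ring
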